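/- arXiv:1207.0118 — 13 statements merged into one kernel-verified Lean document; each statement's English description precedes it below -/
import Mathlib

section
/- For every set I and every L_A-substructure B of the product L_A-structure on I → A, there exists an order filter F on the lattice Setoid I of equivalence relations on I such that for every function f : I → A, f belongs to B if and only if the kernel equivalence relation ker f belongs to F. -/
open FirstOrder Language

/-- The language whose `n`-ary function symbols are all functions `(Fin n → A) → A`. -/
abbrev LA (A : Type*) : FirstOrder.Language := ⟨fun n => (Fin n → A) → A, fun _ => Empty⟩

/-- The full clone structure `Ω(A)` on `A`. -/
instance OmegaStructure (A : Type*) : (LA A).Structure A :=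
  ⟨fun f x => f x, fun r => r.elim⟩

/-- The product `L_A`-structure on `I → A`, interpreted pointwise. -/
instance piStructure (A I : Type*) : (LA A).Structure (I → A) :=
  ⟨fun f x i => f fun k => x k i, fun r => r.elim⟩

/-- Every `L_A`-substructure `B` of the product structure on `I → A` is of the
form `{f | Setoid.ker f ∈ F}` for some order filter `F` on the lattice `Setoid I`. -/
theorem stmt_0 (A : Type*) [Infinite A] (I : Type*) (B : (LA A).Substructure (I → A)) :
    ∃ F : Order.PFilter (Setoid I), ∀ f : I → A, f ∈ B ↔ Setoid.ker f ∈ F := by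
  classical
  -- Key closure lemma: if `g ∈ B` and `ker g ≤ ker f`, then `f ∈ B`.
  have key : ∀ g, g ∈ B → ∀ f : I → A, Setoid.ker g ≤ Setoid.ker f → f ∈ B := by
    intro g hg f hle
    set φ : A → A := fun a =>
      if h : ∃ i, g i = a then f h.choose else Classical.arbitrary A with hφ
    have hfact : ∀ i, φ (g i) = f i := by
      intro i
      have h : ∃ j, g j = g i := ⟨i, rfl⟩
      have h2 : g h.choose = g i := h.choose_spec
      have h3 : f h.choose = f i := hle h2
      simp [hφ, dif_pos h, h3]
    have := B.fun_mem (n := 1) (fun x : Fin 1 → A => φ (x 0)) ![g]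
      (by intro k; fin_cases k <;> simpa using hg)
    convert (show _ ∈ B from this) using 1
    funext i
    simp [Structure.funMap, hfact i]
  -- A binary injection on `A`.
  obtain ⟨e⟩ : Nonempty (A × A ≃ A) := by
    apply Cardinal.eq.mp
    simpa using Cardinal.mul_eq_self (Cardinal.aleph0_le_mk A)
  -- `B` is nonempty (contains constants).
  have hBne : ∃ g, g ∈ B := by
    refine ⟨_, B.fun_mem (n := 0) (fun _ => Classical.arbitrary A) Fin.elim0
      (fun k => k.elim0)⟩
  obtain ⟨g₀, hg₀⟩ := hBne
  -- The candidate filter.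
  set Fs : Set (Setoid I) := {s | ∃ g, g ∈ B ∧ Setoid.ker g ≤ s} with hFs
  have hpf : Order.IsPFilter Fs := by
    apply Order.IsPFilter.of_def
    · exact ⟨Setoid.ker g₀, g₀, hg₀, le_rfl⟩
    · rintro s ⟨g₁, hg₁, hle₁⟩ t ⟨g₂, hg₂, hle₂⟩
      set h : I → A := fun i => e (g₁ i, g₂ i) with hh
      have hhB : h ∈ B := by
        have hargs : ∀ k : Fin 2, ![g₁, g₂] k ∈ B := by
          intro k
          fin_cases k
          · simpa using hg₁
          · simpa using hg₂
        have := B.fun_mem (n := 2) (fun x : Fin 2 → A => e (x 0, x 1)) ![g₁, g₂] hargs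
        exact this
      have hk1 : Setoid.ker h ≤ Setoid.ker g₁ := by
        intro i j hij
        have : (g₁ i, g₂ i) = (g₁ j, g₂ j) := e.injective hij
        exact congrArg Prod.fst this
      have hk2 : Setoid.ker h ≤ Setoid.ker g₂ := by
        intro i j hij
        have : (g₁ i, g₂ i) = (g₁ j, g₂ j) := e.injective hij
        exact congrArg Prod.snd this
      exact ⟨Setoid.ker h, ⟨h, hhB, le_rfl⟩, hk1.trans hle₁, hk2.trans hle₂⟩
    · rintro s t hst ⟨g, hg, hle⟩
      exact ⟨g, hg, hle.trans hst⟩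
  refine ⟨hpf.toPFilter, fun f => ?_⟩
  constructor
  · intro hf
    exact ⟨f, hf, le_rfl⟩
  · rintro ⟨g, hg, hle⟩
    exact key g hg f hle
end

section
/- Let F be an order filter on Setoid I and let f, g : I → A satisfy ker f ∈ F and ker g ∈ F. Then the equalizer {i ∈ I | f i = g i} belongs to 𝔅(F), i.e., it is either empty or an equivalence class of some member of F. -/
/-- `𝔅(F)`: the collection of subsets of `I` consisting of `∅` together with every
equivalence class of every member of `F`. -/
def bAlg {I : Type*} (F : Set (Setoid I)) : Set (Set I) :=
  {R | R = ∅ ∨ ∃ s ∈ F, ∃ i : I, R = {j : I | s i j}}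

/-- If `F` is an order filter on `Setoid I` and `ker f, ker g ∈ F`, then the
equalizer `{i | f i = g i}` belongs to `𝔅(F)`. -/
theorem stmt_2 (A : Type*) [Infinite A] (I : Type*) (F : Order.PFilter (Setoid I))
    (f g : I → A) (hf : Setoid.ker f ∈ F) (hg : Setoid.ker g ∈ F) :
    {i : I | f i = g i} ∈ bAlg (F : Set (Setoid I)) := by
  set E : Set I := {i : I | f i = g i} with hE
  rcases Set.eq_empty_or_nonempty E with h | ⟨i0, hi0⟩
  · exact Or.inl h
  · set s : Setoid I := Setoid.ker f ⊓ Setoid.ker g with hs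
    have hsF : s ∈ F := Order.PFilter.inf_mem hf hg
    -- E is saturated under s
    have hsat : ∀ {i j : I}, i ∈ E → s i j → j ∈ E := by
      intro i j hi hij
      obtain ⟨h1, h2⟩ := hij
      have : f j = f i := (Setoid.ker_def.mp ?_).symm
      · simp only [hE, Set.mem_setOf_eq] at hi ⊢
        calc f j = f i := this
        _ = g i := hi
        _ = g j := h2
      · exact h1
    -- the setoid gluing E into one block
    refine Or.inr ⟨⟨fun i j => s i j ∨ (i ∈ E ∧ j ∈ E), ?_, ?_, ?_⟩, ?_, i0, ?_⟩
    · intro x; exact Or.inl (s.refl x)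
    · rintro x y (h | ⟨h1, h2⟩)
      · exact Or.inl (s.symm h)
      · exact Or.inr ⟨h2, h1⟩
    · rintro x y z (h | ⟨h1, h2⟩) (h' | ⟨h1', h2'⟩)
      · exact Or.inl (s.trans h h')
      · exact Or.inr ⟨hsat h1' (s.symm h), h2'⟩
      · exact Or.inr ⟨h1, hsat h2 h'⟩
      · exact Or.inr ⟨h1, h2'⟩
    · refine Order.PFilter.mem_of_le ?_ hsF
      exact Setoid.le_def.mpr fun h => Or.inl h
    · ext j
      simp only [Set.mem_setOf_eq]
      constructor
      · intro hj; exact Or.inr ⟨hi0, hj⟩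
      · rintro (h | ⟨_, h⟩)
        · exact hsat hi0 h
        · exact h
end

section
/- Let F be an order filter on Setoid I. Then 𝔅(F) is a Boolean subalgebra of the powerset of I: it contains ∅ and the whole set I, and it is closed under complementation, binary unions, and binary intersections. -/
/-- The equivalence relation on `I` with (at most) two classes: `U` and `Uᶜ`. -/
def twoClass {I : Type*} (U : Set I) : Setoid I where
  r x y := x ∈ U ↔ y ∈ U
  iseqv := ⟨fun _ => Iff.rfl, Iff.symm, Iff.trans⟩

/-- Collapse the union of two classes of `s`,`t` into one class of a coarser relation,
given `u ≤ s`, `u ≤ t`. -/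
def unionSetoid {I : Type*} (u : Setoid I) (U : Set I)
    (hU : ∀ x y, u x y → (x ∈ U ↔ y ∈ U)) : Setoid I where
  r x y := (x ∈ U ∧ y ∈ U) ∨ u x y
  iseqv := by
    refine ⟨fun x => Or.inr (u.refl x), ?_, ?_⟩
    · rintro x y (⟨h1, h2⟩ | h); · exact Or.inl ⟨h2, h1⟩
      · exact Or.inr (u.symm h)
    · rintro x y z (⟨h1, h2⟩ | h) (⟨h3, h4⟩ | h')
      · exact Or.inl ⟨h1, h4⟩
      · exact Or.inl ⟨h1, (hU y z h').mp h2⟩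
      · exact Or.inl ⟨(hU x y h).mpr h3, h4⟩
      · exact Or.inr (u.trans h h')

/-- For an order filter `F` on `Setoid I`, `𝔅(F)` is a Boolean subalgebra of the
powerset of `I`: it contains `∅` and `I`, and is closed under complements, unions and
intersections. -/
theorem stmt_3 (I : Type*) (F : Order.PFilter (Setoid I)) :
    ∅ ∈ bAlg (F : Set (Setoid I)) ∧
    (Set.univ : Set I) ∈ bAlg (F : Set (Setoid I)) ∧
    (∀ R ∈ bAlg (F : Set (Setoid I)), Rᶜ ∈ bAlg (F : Set (Setoid I))) ∧
    (∀ R ∈ bAlg (F : Set (Setoid I)), ∀ S ∈ bAlg (F : Set (Setoid I)),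
      R ∪ S ∈ bAlg (F : Set (Setoid I))) ∧
    (∀ R ∈ bAlg (F : Set (Setoid I)), ∀ S ∈ bAlg (F : Set (Setoid I)),
      R ∩ S ∈ bAlg (F : Set (Setoid I))) := by
  classical
  obtain ⟨s₀, hs₀⟩ := F.nonempty
  have htop : (⊤ : Setoid I) ∈ F := Order.PFilter.mem_of_le le_top hs₀
  refine ⟨Or.inl rfl, ?_, ?_, ?_, ?_⟩
  · -- univ
    by_cases h : Nonempty I
    · obtain ⟨i⟩ := h
      exact Or.inr ⟨⊤, htop, i, by ext j; simp [Setoid.top_def]⟩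
    · left; ext x; exact absurd ⟨x⟩ h
  · -- complement
    rintro R (rfl | ⟨s, hs, i, rfl⟩)
    · by_cases h : Nonempty I
      · obtain ⟨i⟩ := h
        exact Or.inr ⟨⊤, htop, i, by ext j; simp [Setoid.top_def]⟩
      · left; ext x; exact absurd ⟨x⟩ h
    · set U : Set I := {j : I | s i j}
      by_cases hc : ∃ j, j ∉ U
      · obtain ⟨j, hj⟩ := hc
        have h2 : twoClass U ∈ F := by
          refine Order.PFilter.mem_of_le ?_ hs
          intro x y hxy
          exact ⟨fun h => s.trans h hxy, fun h => s.trans h (s.symm hxy)⟩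
        refine Or.inr ⟨twoClass U, h2, j, ?_⟩
        ext k
        simp only [Set.mem_compl_iff, Set.mem_setOf_eq]
        constructor
        · intro hk; exact ⟨fun h => absurd h hj, fun h => absurd h hk⟩
        · intro h hk; exact hj (h.mpr hk)
      · left
        ext k; simp only [Set.mem_compl_iff, Set.mem_empty_iff_false, iff_false, not_not]
        push_neg at hc; exact hc k
  · -- union
    rintro R (rfl | ⟨s, hs, i, rfl⟩) S hS
    · rcases hS with (rfl | ⟨t, ht, j, rfl⟩)
      · exact Or.inl (by simp)
      · exact Or.inr ⟨t, ht, j, by simp⟩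
    rcases hS with (rfl | ⟨t, ht, j, rfl⟩)
    · exact Or.inr ⟨s, hs, i, by simp⟩
    obtain ⟨u, hu, hus, hut⟩ := F.directed s hs t ht
    set U : Set I := {k : I | s i k} ∪ {k : I | t j k} with hUdef
    have hU : ∀ x y, u x y → (x ∈ U ↔ y ∈ U) := by
      intro x y hxy
      have hsxy : s x y := hus hxy
      have htxy : t x y := hut hxy
      constructor
      · rintro (h | h)
        · exact Or.inl (s.trans h hsxy)
        · exact Or.inr (t.trans h htxy)
      · rintro (h | h)
        · exact Or.inl (s.trans h (s.symm hsxy))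
        · exact Or.inr (t.trans h (t.symm htxy))
    have hv : unionSetoid u U hU ∈ F := by
      refine Order.PFilter.mem_of_le ?_ hu
      intro x y hxy
      exact Or.inr hxy
    refine Or.inr ⟨unionSetoid u U hU, hv, i, ?_⟩
    ext k
    show k ∈ U ↔ (i ∈ U ∧ k ∈ U) ∨ u i k
    have hiU : i ∈ U := Or.inl (s.refl i)
    constructor
    · intro hk; exact Or.inl ⟨hiU, hk⟩
    · rintro (⟨_, hk⟩ | h)
      · exact hk
      · exact (hU i k h).mp hiU
  · -- intersection
    rintro R (rfl | ⟨s, hs, i, rfl⟩) S hS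
    · exact Or.inl (by simp)
    rcases hS with (rfl | ⟨t, ht, j, rfl⟩)
    · exact Or.inl (by simp)
    by_cases hne : ({k : I | s i k} ∩ {k : I | t j k}).Nonempty
    · obtain ⟨k, hks, hkt⟩ := hne
      obtain ⟨u, hu, hus, hut⟩ := F.directed s hs t ht
      have hinf : s ⊓ t ∈ F :=
        Order.PFilter.mem_of_le (le_inf hus hut) hu
      refine Or.inr ⟨s ⊓ t, hinf, k, ?_⟩
      ext m
      have : (s ⊓ t) k m ↔ s k m ∧ t k m := Iff.rfl
      simp only [Set.mem_inter_iff, Set.mem_setOf_eq, this]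
      constructor
      · rintro ⟨h1, h2⟩
        have hkt' : t j k := hkt
        have hks' : s i k := hks
        exact ⟨s.trans (s.iseqv.symm hks') h1, t.trans (t.iseqv.symm hkt') h2⟩
      · rintro ⟨h1, h2⟩
        have hkt' : t j k := hkt
        have hks' : s i k := hks
        exact ⟨s.trans hks' h1, t.trans hkt' h2⟩
    · left
      rw [Set.not_nonempty_iff_eq_empty] at hne
      exact hne
end

section
/- Let F be an order filter on Setoid I, let Ω(A)^F = {f : I → A | ker f ∈ F}, and let θ be a congruence on Ω(A)^F. Define Z to be the set of all R ∈ 𝔅(F) such that for all f, g ∈ Ω(A)^F, if f and g agree on R then θ f g. Then: (i) Z is a filter on the Boolean algebra 𝔅(F), i.e., Z is closed under binary intersections and is upward closed within 𝔅(F); and (ii) for all f, g ∈ Ω(A)^F, θ f g holds if and only if {i ∈ I | f i = g i} ∈ Z. -/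
/-- The set `Z` associated to a congruence `θ` on `Ω(A)^F`: all `R ∈ 𝔅(F)` such that any two
elements of `Ω(A)^F` agreeing on `R` are `θ`-related. -/
def Zset {A I : Type*} (F : Order.PFilter (Setoid I))
    (θ : {f : I → A // Setoid.ker f ∈ F} → {f : I → A // Setoid.ker f ∈ F} → Prop) :
    Set (Set I) :=
  {R ∈ bAlg (F : Set (Setoid I)) |
    ∀ f g : {f : I → A // Setoid.ker f ∈ F}, (∀ i ∈ R, f.1 i = g.1 i) → θ f g}

/-- Let `θ` be a congruence on `Ω(A)^F = {f : I → A | ker f ∈ F}` (an equivalence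
relation compatible with all pointwise `L_A`-operations).  Then the set `Z` of all `R ∈ 𝔅(F)`
such that any two elements of `Ω(A)^F` agreeing on `R` are `θ`-related is (i) closed under
binary intersections and upward closed within `𝔅(F)`, and (ii) for all `f, g ∈ Ω(A)^F`,
`θ f g ↔ {i | f i = g i} ∈ Z`. -/
theorem stmt_4 (A : Type*) [Infinite A] (I : Type*) (F : Order.PFilter (Setoid I))
    (θ : {f : I → A // Setoid.ker f ∈ F} → {f : I → A // Setoid.ker f ∈ F} → Prop)
    (hEquiv : Equivalence θ)
    (hCompat : ∀ (n : ℕ) (g : (Fin n → A) → A)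
      (u v : Fin n → {f : I → A // Setoid.ker f ∈ F})
      (hu : Setoid.ker (fun i : I => g fun k => (u k).1 i) ∈ F)
      (hv : Setoid.ker (fun i : I => g fun k => (v k).1 i) ∈ F),
      (∀ k, θ (u k) (v k)) → θ ⟨fun i => g fun k => (u k).1 i, hu⟩
        ⟨fun i => g fun k => (v k).1 i, hv⟩) :
    (∀ R ∈ Zset F θ, ∀ S ∈ Zset F θ, R ∩ S ∈ Zset F θ) ∧
    (∀ R ∈ Zset F θ, ∀ S ∈ bAlg (F : Set (Setoid I)), R ⊆ S → S ∈ Zset F θ) ∧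
    (∀ f g : {f : I → A // Setoid.ker f ∈ F},
      θ f g ↔ {i : I | f.1 i = g.1 i} ∈ Zset F θ) := by
  classical
  -- upward closure of F
  have hup : ∀ {s t : Setoid I}, s ∈ F → s ≤ t → t ∈ F :=
    fun hs hst => Order.PFilter.mem_of_le hst hs
  have hinf : ∀ {s t : Setoid I}, s ∈ F → t ∈ F → s ⊓ t ∈ F :=
    fun hs ht => Order.PFilter.inf_mem hs ht
  -- the key congruence trick via a 4-ary operation
  have key : ∀ f g f' g' : {f : I → A // Setoid.ker f ∈ F}, θ f g → (∀ i, f.1 i = g.1 i → f'.1 i = g'.1 i) → θ f' g' := by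
    intro f g f' g' hfg hag
    set G : (Fin 4 → A) → A := fun x => if x 0 = x 1 then x 2 else x 3 with hG
    set u : Fin 4 → {f : I → A // Setoid.ker f ∈ F} := ![f, f, f', g'] with hu
    set v : Fin 4 → {f : I → A // Setoid.ker f ∈ F} := ![f, g, f', g'] with hv
    have e1 : (fun i : I => G fun k => (u k).1 i) = f'.1 := by
      funext i; simp [hG, hu]
    have e2 : (fun i : I => G fun k => (v k).1 i) = g'.1 := by
      funext i
      simp only [hG, hv]
      by_cases h : f.1 i = g.1 i
      · simpa [h] using hag i h
      · simp [h]
    have hku : Setoid.ker (fun i : I => G fun k => (u k).1 i) ∈ F := by rw [e1]; exact f'.2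
    have hkv : Setoid.ker (fun i : I => G fun k => (v k).1 i) ∈ F := by rw [e2]; exact g'.2
    have := hCompat 4 G u v hku hkv (by
      intro k
      fin_cases k <;> simp [hu, hv] <;> first | exact hEquiv.refl _ | exact hfg)
    rwa [show (⟨_, hku⟩ : {f : I → A // Setoid.ker f ∈ F}) = f' from Subtype.ext e1,
      show (⟨_, hkv⟩ : {f : I → A // Setoid.ker f ∈ F}) = g' from Subtype.ext e2] at this
  refine ⟨?_, ?_, ?_⟩
  · -- binary intersections
    rintro R ⟨hRB, hRZ⟩ S ⟨hSB, hSZ⟩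
    constructor
    · -- R ∩ S ∈ bAlg
      rcases hRB with hR | ⟨s, hs, i₁, hR⟩
      · left; simp [hR]
      rcases hSB with hS | ⟨t, ht, i₂, hS⟩
      · left; simp [hS]
      by_cases hne : (R ∩ S).Nonempty
      · obtain ⟨k, hkR, hkS⟩ := hne
        right
        refine ⟨Setoid.mk (fun x y => s x y ∧ t x y)
          ⟨fun x => ⟨s.refl' x, t.refl' x⟩,
           fun h => ⟨s.symm' h.1, t.symm' h.2⟩,
           fun h h' => ⟨s.trans' h.1 h'.1, t.trans' h.2 h'.2⟩⟩, ?_, k, ?_⟩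
        · refine hup (hinf hs ht) ?_
          intro x y hxy
          exact ⟨Setoid.le_def.1 inf_le_left hxy, Setoid.le_def.1 inf_le_right hxy⟩
        · have hkR' : s i₁ k := by rw [hR] at hkR; exact hkR
          have hkS' : t i₂ k := by rw [hS] at hkS; exact hkS
          ext j
          simp only [hR, hS, Set.mem_inter_iff, Set.mem_setOf_eq]
          exact ⟨fun ⟨h1, h2⟩ => ⟨s.trans' (s.symm' hkR') h1, t.trans' (t.symm' hkS') h2⟩,
            fun ⟨h1, h2⟩ => ⟨s.trans' hkR' h1, t.trans' hkS' h2⟩⟩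
      · left; exact Set.not_nonempty_iff_eq_empty.1 hne
    · -- agreement on R ∩ S implies θ
      intro f g hagr
      -- patch: h = g on S, f elsewhere
      have hker : Setoid.ker (fun i => if i ∈ S then g.1 i else f.1 i) ∈ F := by
        rcases hSB with hS | ⟨t, ht, i₂, hS⟩
        · have : (fun i => if i ∈ S then g.1 i else f.1 i) = f.1 := by
            funext i; simp [hS]
          rw [this]; exact f.2
        · refine hup (hinf (hinf f.2 g.2) ht) ?_
          intro x y hxy
          have h1 : f.1 x = f.1 y :=
            Setoid.le_def.1 inf_le_left (Setoid.le_def.1 inf_le_left hxy)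
          have h2 : g.1 x = g.1 y :=
            Setoid.le_def.1 inf_le_right (Setoid.le_def.1 inf_le_left hxy)
          have h3 : t x y := Setoid.le_def.1 inf_le_right hxy
          have hmem : x ∈ S ↔ y ∈ S := by
            rw [hS]
            exact ⟨fun h => t.trans' h h3, fun h => t.trans' h (t.symm' h3)⟩
          show (if x ∈ S then g.1 x else f.1 x) = (if y ∈ S then g.1 y else f.1 y)
          by_cases hx : x ∈ S
          · rw [if_pos hx, if_pos (hmem.1 hx)]; exact h2
          · rw [if_neg hx, if_neg (fun h => hx (hmem.2 h))]; exact h1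
      set h : {f : I → A // Setoid.ker f ∈ F} := ⟨fun i => if i ∈ S then g.1 i else f.1 i, hker⟩ with hh
      have h1 : θ f h := by
        refine hRZ f h ?_
        intro i hiR
        show f.1 i = if i ∈ S then g.1 i else f.1 i
        by_cases hiS : i ∈ S
        · rw [if_pos hiS]; exact hagr i ⟨hiR, hiS⟩
        · rw [if_neg hiS]
      have h2 : θ h g := by
        refine hSZ h g ?_
        intro i hiS
        show (if i ∈ S then g.1 i else f.1 i) = g.1 i
        rw [if_pos hiS]
      exact hEquiv.trans h1 h2
  · -- upward closure
    rintro R ⟨hRB, hRZ⟩ S hSB hRS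
    exact ⟨hSB, fun f g hag => hRZ f g fun i hi => hag i (hRS hi)⟩
  · -- θ f g ↔ {i | f i = g i} ∈ Z
    intro f g
    constructor
    · intro hfg
      constructor
      · -- {i | f i = g i} ∈ bAlg
        by_cases hne : {i : I | f.1 i = g.1 i}.Nonempty
        · obtain ⟨i₀, hi₀⟩ := hne
          right
          refine ⟨Setoid.mk
            (fun x y => (f.1 x = f.1 y ∧ g.1 x = g.1 y) ∨ (f.1 x = g.1 x ∧ f.1 y = g.1 y))
            ⟨fun x => Or.inl ⟨rfl, rfl⟩,
             fun h => h.elim (fun a => Or.inl ⟨a.1.symm, a.2.symm⟩) (fun a => Or.inr ⟨a.2, a.1⟩),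
             fun h h' => by
              rcases h with ⟨h1, h2⟩ | ⟨h1, h2⟩ <;> rcases h' with ⟨h3, h4⟩ | ⟨h3, h4⟩
              · exact Or.inl ⟨h1.trans h3, h2.trans h4⟩
              · exact Or.inr ⟨by rw [h1, h2]; exact h3, h4⟩
              · exact Or.inr ⟨h1, by rw [← h3, ← h4]; exact h2⟩
              · exact Or.inr ⟨h1, h4⟩⟩, ?_, i₀, ?_⟩
          · refine hup (hinf f.2 g.2) ?_
            intro x y hxy
            exact Or.inl ⟨Setoid.le_def.1 inf_le_left hxy, Setoid.le_def.1 inf_le_right hxy⟩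
          · ext j
            simp only [Set.mem_setOf_eq]
            show f.1 j = g.1 j ↔ _ ∨ _
            constructor
            · intro hj; exact Or.inr ⟨hi₀, hj⟩
            · rintro (⟨h1, h2⟩ | ⟨h1, h2⟩)
              · rw [← h1, ← h2]; exact hi₀
              · exact h2
        · left; exact Set.not_nonempty_iff_eq_empty.1 hne
      · intro f' g' hag
        exact key f g f' g' hfg fun i hi => hag i hi
    · rintro ⟨_, hZ⟩
      exact hZ f g fun i hi => hi
end

section
/- Let F be an order filter on Setoid I and let Z ⊆ 𝔅(F) satisfy: the whole set I belongs to Z, Z is closed under binary intersections, and Z is upward closed within 𝔅(F). Then the relation θ on Ω(A)^F = {f : I → A | ker f ∈ F} defined by θ f g ↔ {i ∈ I | f i = g i} ∈ Z is a congruence on Ω(A)^F, i.e., an equivalence relation compatible with all the L_A-operations. -/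
/-- The equality set of two functions whose kernels lie in `F` belongs to `𝔅(F)`. -/
lemma eqset_mem_bAlg {A I : Type*} (F : Order.PFilter (Setoid I)) (f g : I → A)
    (hf : Setoid.ker f ∈ F) (hg : Setoid.ker g ∈ F) :
    {i : I | f i = g i} ∈ bAlg (F : Set (Setoid I)) := by
  set E : Set I := {i : I | f i = g i} with hE
  rcases E.eq_empty_or_nonempty with h | ⟨i₀, hi₀⟩
  · exact Or.inl h
  · set s : Setoid I := Setoid.ker f ⊓ Setoid.ker g with hs
    have hsF : s ∈ F := Order.PFilter.inf_mem hf hg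
    -- saturation: if `s i j` and `j ∈ E` then `i ∈ E`
    have hsat : ∀ i j : I, s i j → j ∈ E → i ∈ E := by
      intro i j hij hj
      have h1 : f i = f j ∧ g i = g j := Setoid.inf_iff_and.mp hij
      simp only [hE, Set.mem_setOf_eq] at hj ⊢
      rw [h1.1, h1.2, hj]
    set t : Setoid I :=
      ⟨fun i j => s i j ∨ (i ∈ E ∧ j ∈ E), by
        constructor
        · intro i; exact Or.inl (s.refl i)
        · rintro i j (h | h)
          · exact Or.inl (s.symm h)
          · exact Or.inr ⟨h.2, h.1⟩
        · rintro i j k (h1 | h1) (h2 | h2)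
          · exact Or.inl (s.trans h1 h2)
          · exact Or.inr ⟨hsat i j h1 h2.1, h2.2⟩
          · exact Or.inr ⟨h1.1, hsat k j (s.symm h2) h1.2⟩
          · exact Or.inr ⟨h1.1, h2.2⟩⟩ with ht
    have hst : s ≤ t := by
      rw [Setoid.le_def]; intro x y h; exact Or.inl h
    have htF : t ∈ F := Order.PFilter.mem_of_le hst hsF
    refine Or.inr ⟨t, htF, i₀, ?_⟩
    ext j
    simp only [Set.mem_setOf_eq]
    show j ∈ E ↔ (s i₀ j ∨ (i₀ ∈ E ∧ j ∈ E))
    constructor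
    · intro hj
      exact Or.inr ⟨hi₀, hj⟩
    · intro hj
      rcases hj with h | h
      · exact hsat j i₀ (s.symm h) hi₀
      · exact h.2

/-- Let `F` be an order filter on `Setoid I` and let `Z ⊆ 𝔅(F)` contain the whole
set `I`, be closed under binary intersections, and be upward closed within `𝔅(F)`.  Then the
relation `θ` on `Ω(A)^F = {f : I → A | ker f ∈ F}` defined by `θ f g ↔ {i | f i = g i} ∈ Z`
is a congruence: an equivalence relation compatible with all the pointwise `L_A`-operations. -/
theorem stmt_5 (A : Type*) [Infinite A] (I : Type*) (F : Order.PFilter (Setoid I))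
    (Z : Set (Set I)) (hZB : Z ⊆ bAlg (F : Set (Setoid I)))
    (hZuniv : (Set.univ : Set I) ∈ Z)
    (hZinter : ∀ R ∈ Z, ∀ S ∈ Z, R ∩ S ∈ Z)
    (hZup : ∀ R ∈ Z, ∀ S ∈ bAlg (F : Set (Setoid I)), R ⊆ S → S ∈ Z)
    (θ : {f : I → A // Setoid.ker f ∈ F} → {f : I → A // Setoid.ker f ∈ F} → Prop)
    (hθ : ∀ f g : {f : I → A // Setoid.ker f ∈ F},
      θ f g ↔ {i : I | f.1 i = g.1 i} ∈ Z) :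
    Equivalence θ ∧
    ∀ (n : ℕ) (g : (Fin n → A) → A)
      (u v : Fin n → {f : I → A // Setoid.ker f ∈ F})
      (hu : Setoid.ker (fun i : I => g fun k => (u k).1 i) ∈ F)
      (hv : Setoid.ker (fun i : I => g fun k => (v k).1 i) ∈ F),
      (∀ k, θ (u k) (v k)) → θ ⟨fun i => g fun k => (u k).1 i, hu⟩
        ⟨fun i => g fun k => (v k).1 i, hv⟩ := by
  -- finite intersections of members of Z lie in Z
  have hfin : ∀ (n : ℕ) (E : Fin n → Set I), (∀ k, E k ∈ Z) → (⋂ k, E k) ∈ Z := by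
    intro n
    induction n with
    | zero => intro E _; simpa using hZuniv
    | succ m ih =>
      intro E hEk
      have : (⋂ k, E k) = E 0 ∩ ⋂ k : Fin m, E k.succ := by
        ext x
        simp only [Set.mem_iInter, Set.mem_inter_iff]
        constructor
        · intro h; exact ⟨h 0, fun k => h k.succ⟩
        · rintro ⟨h0, hs⟩ k
          rcases Fin.eq_zero_or_eq_succ k with rfl | ⟨j, rfl⟩
          · exact h0
          · exact hs j
      rw [this]
      exact hZinter _ (hEk 0) _ (ih _ fun k => hEk k.succ)
  constructor
  · constructor
    · intro f
      rw [hθ]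
      simpa using hZuniv
    · intro f g h
      rw [hθ] at h ⊢
      have : {i : I | f.1 i = g.1 i} = {i : I | g.1 i = f.1 i} := by
        ext i; exact eq_comm
      rwa [this] at h
    · intro f g h hfg hgh
      rw [hθ] at hfg hgh ⊢
      refine hZup _ (hZinter _ hfg _ hgh) _ (eqset_mem_bAlg F f.1 h.1 f.2 h.2) ?_
      rintro i ⟨h1, h2⟩
      exact h1.trans h2
  · intro n g u v hu hv huv
    rw [hθ]
    have hmem : ∀ k, {i : I | (u k).1 i = (v k).1 i} ∈ Z := fun k => (hθ _ _).mp (huv k)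
    refine hZup _ (hfin n _ hmem) _
      (eqset_mem_bAlg F _ _ hu hv) ?_
    intro i hi
    simp only [Set.mem_iInter, Set.mem_setOf_eq] at hi ⊢
    exact congrArg g (funext fun k => hi k)
end

section
/- Let M₁ and M₂ be clone-compatible L_A-structures, each having at least two elements. Then the product L_A-structure M₁ × M₂ (with function symbols interpreted coordinatewise) is not elementarily equivalent to Ω(A). -/
open FirstOrder Language

/-- The product structure on `M × N`, with function symbols interpreted coordinatewise. -/
instance prodStructure (L : FirstOrder.Language) (M N : Type*) [L.Structure M] [L.Structure N] :
    L.Structure (M × N) where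
  funMap f x := (Structure.funMap f fun k => (x k).1, Structure.funMap f fun k => (x k).2)
  RelMap r x := Structure.RelMap r (fun k => (x k).1) ∧ Structure.RelMap r fun k => (x k).2

/-- A structure for the language `L_A` is clone-compatible if the interpretations of
projections act as projections and the interpretation of a composite function is the composite
of the interpretations. -/
def CloneCompatible (A M : Type*) [(LA A).Structure M] : Prop :=
  (∀ (n : ℕ) (k : Fin n) (x : Fin n → M),
    Structure.funMap (L := LA A) (fun v : Fin n → A => v k) x = x k) ∧
  (∀ (n m : ℕ) (g : (Fin n → A) → A) (h : Fin n → ((Fin m → A) → A)) (x : Fin m → M),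
    Structure.funMap (L := LA A) (fun v : Fin m → A => g fun k => h k v) x =
      Structure.funMap (L := LA A) g fun k => Structure.funMap (L := LA A) (h k) x)

/-- If `M₁` and `M₂` are clone-compatible `L_A`-structures, each with at least two
elements, then the product structure `M₁ × M₂` is not elementarily equivalent to `Ω(A)`. -/
theorem stmt_6 (A : Type*) [Infinite A] (M₁ M₂ : Type*)
    [(LA A).Structure M₁] [(LA A).Structure M₂]
    (h₁ : CloneCompatible A M₁) (h₂ : CloneCompatible A M₂)
    [Nontrivial M₁] [Nontrivial M₂] :
    ¬ (M₁ × M₂ ≅[LA A] A) := by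
  intro h
  have : Nonempty A := inferInstance
  let a : A := Classical.arbitrary A
  let c : (LA A).Functions 0 := fun _ => a
  have : DecidableEq A := Classical.decEq A
  let d : (LA A).Functions 2 := fun v => if v 0 = a then v 0 else v 1
  let X : (LA A).Term (Empty ⊕ Fin 2) := Term.var (Sum.inr 0)
  let Y : (LA A).Term (Empty ⊕ Fin 2) := Term.var (Sum.inr 1)
  let C : (LA A).Term (Empty ⊕ Fin 2) := Term.func c ![]
  let D : (LA A).Term (Empty ⊕ Fin 2) := Term.func d ![X, Y]
  let φ : (LA A).BoundedFormula Empty 2 :=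
    ((Term.bdEqual X C).imp (Term.bdEqual D X)) ⊓
      (((Term.bdEqual X C).not).imp (Term.bdEqual D Y))
  let σ : (LA A).Sentence := φ.all.all
  have hA : A ⊨ σ := by
    simp only [σ, φ, X, Y, C, D, Sentence.Realize, Formula.Realize,
      BoundedFormula.realize_all, BoundedFormula.realize_inf, BoundedFormula.realize_imp,
      BoundedFormula.realize_not, BoundedFormula.realize_bdEqual, Term.realize_func,
      Term.realize_var, Sum.elim_inr]
    intro x y
    simp [Fin.snoc, Structure.funMap, c, d]
    constructor
    · intro h'; simp [h']
    · intro h'; simp [h']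
  have hP : (M₁ × M₂) ⊨ σ := (h.realize_sentence σ).2 hA
  have hP' : ∀ x y : M₁ × M₂,
      (x = Structure.funMap (M := M₁ × M₂) c ![] →
        Structure.funMap (M := M₁ × M₂) d ![x, y] = x) ∧
      (x ≠ Structure.funMap (M := M₁ × M₂) c ![] →
        Structure.funMap (M := M₁ × M₂) d ![x, y] = y) := by
    have := hP
    simp only [σ, φ, X, Y, C, D, Sentence.Realize, Formula.Realize,
      BoundedFormula.realize_all, BoundedFormula.realize_inf, BoundedFormula.realize_imp,
      BoundedFormula.realize_not, BoundedFormula.realize_bdEqual, Term.realize_func,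
      Term.realize_var, Sum.elim_inr] at this
    intro x y
    have h2 := this x y
    simp [Fin.snoc] at h2
    convert h2 using 3 <;>
      · congr 1
        funext i
        fin_cases i <;> simp [Fin.snoc]
  set cP := Structure.funMap (M := M₁ × M₂) c ![] with hcP
  obtain ⟨m₂, hm₂⟩ := exists_ne cP.2
  obtain ⟨b₁, hb₁⟩ := exists_ne cP.1
  have hx : ((cP.1, m₂) : M₁ × M₂) ≠ cP := fun e => hm₂ (congrArg Prod.snd e)
  have h3 := (hP' (cP.1, m₂) (b₁, m₂)).2 hx
  have h4 := (hP' cP (b₁, m₂)).1 rfl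
  have e : (fun k => ((![((cP.1, m₂) : M₁ × M₂), (b₁, m₂)]) k).1)
      = (fun k => ((![cP, ((b₁, m₂) : M₁ × M₂)]) k).1) := by
    funext k; fin_cases k <;> rfl
  have h5 : Structure.funMap (L := LA A) (M := M₁) d
        (fun k => ((![((cP.1, m₂) : M₁ × M₂), (b₁, m₂)]) k).1)
      = Structure.funMap (L := LA A) (M := M₁) d
        (fun k => ((![cP, ((b₁, m₂) : M₁ × M₂)]) k).1) := congrArg _ e
  have g3 : Structure.funMap (L := LA A) (M := M₁) d
      (fun k => ((![((cP.1, m₂) : M₁ × M₂), (b₁, m₂)]) k).1) = b₁ := congrArg Prod.fst h3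
  have g4 : Structure.funMap (L := LA A) (M := M₁) d
      (fun k => ((![cP, ((b₁, m₂) : M₁ × M₂)]) k).1) = cP.1 := congrArg Prod.fst h4
  exact hb₁ (g3.symm.trans (h5.trans g4))
end

section
/- Let U be an ultrafilter on a set I and let B be an L_A-substructure of the product L_A-structure on I → A. Then the image of B under the canonical quotient map from I → A to the ultrapower ∏_U A is closed under all L_A-operations of ∏_U A, and the induced substructure on this image is an elementary substructure of ∏_U A: every first-order L_A-formula with parameters from the image is satisfied in ∏_U A if and only if it is satisfied in the induced substructure. -/
open FirstOrder Language Structure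

/-- The quotient map to the ultrapower is an `L_A`-homomorphism. -/
noncomputable def quotHom (A : Type*) (I : Type*) (U : Ultrafilter I) :
    (I → A) →[LA A] ((U : Filter I).Product fun _ : I => A) where
  toFun f := (↑f : (U : Filter I).Product fun _ : I => A)
  map_fun' {n} f x := by
    exact (Ultraproduct.funMap_cast f x).symm
  map_rel' {n} r := r.elim

/-- Let `U` be an ultrafilter on `I` and let `B` be an `L_A`-substructure of the
product structure on `I → A`.  Then the image of `B` under the canonical quotient map to the
ultrapower `∏_U A` is (the underlying set of) a substructure of `∏_U A`, and this substructure
is elementary: every first-order `L_A`-formula with parameters from the image holds in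
`∏_U A` iff it holds in the induced substructure. -/
theorem stmt_7 (A : Type*) [Infinite A] (I : Type*) (U : Ultrafilter I)
    (B : (LA A).Substructure (I → A)) :
    ∃ S : (LA A).Substructure ((U : Filter I).Product fun _ : I => A),
      (S : Set ((U : Filter I).Product fun _ : I => A)) =
        (fun f : I → A => (↑f : (U : Filter I).Product fun _ : I => A)) '' (B : Set (I → A)) ∧
      S.IsElementary := by
  classical
  refine ⟨B.map (quotHom A I U), rfl, ?_⟩
  apply Substructure.isElementary_of_exists
  intro n φ x a h
  -- choose representatives in B for the parameters
  have hx : ∀ i, ∃ b : I → A, b ∈ B ∧ (↑b : (U : Filter I).Product fun _ : I => A) = (x i : (U : Filter I).Product fun _ : I => A) := by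
    intro i
    rcases (x i).2 with ⟨b, hb, hbe⟩
    exact ⟨b, hb, hbe⟩
  choose b hbB hbe using hx
  -- representative of a
  obtain ⟨g, hg⟩ := Quotient.exists_rep a
  -- Skolem function
  set f : (Fin n → A) → A := fun y =>
    if hy : ∃ c : A, φ.Realize (default : Empty → A) (Fin.snoc y c) then hy.choose
    else Classical.arbitrary A with hf
  have hfspec : ∀ y : Fin n → A, (∃ c : A, φ.Realize (default : Empty → A) (Fin.snoc y c)) →
      φ.Realize (default : Empty → A) (Fin.snoc y (f y)) := by
    intro y hy
    simp only [hf, dif_pos hy]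
    exact hy.choose_spec
  -- funMap of f on b is in B
  have hmem : (funMap (L := LA A) (M := I → A) f b) ∈ B := B.fun_mem f b hbB
  refine ⟨⟨_, funMap (L := LA A) (M := I → A) f b, hmem, rfl⟩, ?_⟩
  -- now verify the realization
  have key : ∀ v : Fin (n + 1) → (I → A),
      (φ.Realize (M := (U : Filter I).Product fun _ : I => A) (default : Empty → _)
        (fun i => (↑(v i) : (U : Filter I).Product fun _ : I => A))) ↔
      ∀ᶠ j : I in (U : Filter I), φ.Realize (default : Empty → A) (fun i => v i j) := by
    intro v
    rw [show (default : Empty → (U : Filter I).Product fun _ : I => A)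
        = fun e : Empty => (↑((default : Empty → ∀ _ : I, A) e) :
          (U : Filter I).Product fun _ : I => A) from funext fun e => e.elim]
    refine (Ultraproduct.boundedFormula_realize_cast (M := fun _ : I => A) (u := U) φ _ v).trans ?_
    refine Filter.eventually_congr (Filter.Eventually.of_forall fun j => iff_of_eq ?_)
    congr 1
    · exact funext fun e => e.elim
  have hsnoc : (Fin.snoc ((↑) ∘ x) a : Fin (n + 1) → (U : Filter I).Product fun _ : I => A)
      = fun i => (↑((Fin.snoc b g : Fin (n + 1) → I → A) i) : (U : Filter I).Product fun _ : I => A) := by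
    funext i
    refine Fin.lastCases ?_ (fun i => ?_) i
    · exact (Fin.snoc_last (α := fun _ => (U : Filter I).Product fun _ : I => A) _ _).trans (hg.symm.trans (congrArg (fun f : I → A => (↑f : (U : Filter I).Product fun _ : I => A)) (Fin.snoc_last (α := fun _ => I → A) _ _).symm))
    · simp only [Fin.snoc_castSucc, Function.comp_apply]
      exact (hbe i).symm
  have h1 : ∀ᶠ j : I in (U : Filter I),
      φ.Realize (default : Empty → A) (fun i => (Fin.snoc b g : Fin (n + 1) → I → A) i j) := by
    rw [← key]
    rw [← hsnoc]
    exact h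
  have h2 : ∀ᶠ j : I in (U : Filter I),
      φ.Realize (default : Empty → A)
        (fun i => (Fin.snoc b (funMap (L := LA A) (M := I → A) f b) : Fin (n + 1) → I → A) i j) := by
    filter_upwards [h1] with j hj
    have hsn : ∀ (c : I → A) (i : Fin (n + 1)), (Fin.snoc b c : Fin (n + 1) → I → A) i j = (Fin.snoc (fun k => b k j) (c j) : Fin (n + 1) → A) i := by
      intro c i
      refine Fin.lastCases ?_ (fun i => ?_) i <;> simp
    have hex : ∃ c : A, φ.Realize (default : Empty → A)
        (Fin.snoc (fun k => b k j) c) := by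
      refine ⟨g j, ?_⟩
      convert hj using 1
      funext i
      exact (hsn g i).symm
    have := hfspec (fun k => b k j) hex
    convert this using 1
    funext i
    rw [hsn]
    rfl
  have goal : (Fin.snoc ((↑) ∘ x)
      (↑(funMap (L := LA A) (M := I → A) f b) : (U : Filter I).Product fun _ : I => A) :
      Fin (n + 1) → (U : Filter I).Product fun _ : I => A)
      = fun i => (↑((Fin.snoc b (funMap (L := LA A) (M := I → A) f b) : Fin (n + 1) → I → A) i) : (U : Filter I).Product fun _ : I => A) := by
    funext i
    refine Fin.lastCases ?_ (fun i => ?_) i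
    · exact (Fin.snoc_last (α := fun _ => (U : Filter I).Product fun _ : I => A) _ _).trans (congrArg (fun f : I → A => (↑f : (U : Filter I).Product fun _ : I => A)) (Fin.snoc_last (α := fun _ => I → A) _ _).symm)
    · exact (Fin.snoc_castSucc (α := fun _ => (U : Filter I).Product fun _ : I => A) _ _ _).trans ((hbe i).symm.trans (congrArg (fun f : I → A => (↑f : (U : Filter I).Product fun _ : I => A)) (Fin.snoc_castSucc (α := fun _ => I → A) _ _ _).symm))
  show φ.Realize (default : Empty → _) (Fin.snoc (Subtype.val ∘ x)
    (↑(funMap (L := LA A) (M := I → A) f b) : (U : Filter I).Product fun _ : I => A))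
  rw [goal, key]
  exact h2
end

section
/- Let I be a set and consider the product L_A-structure on functions (I → A) → A (the product of copies of Ω(A) indexed by I → A). Then the L_A-substructure generated by the set of projections {π_i | i ∈ I}, where π_i x = x i, has underlying set exactly the set of finitely determined functions: a function g : (I → A) → A lies in the substructure generated by the projections if and only if there is a finite set s ⊆ I such that g x = g y whenever x and y agree on s. -/
open FirstOrder Language

/-- In the product `L_A`-structure on `(I → A) → A` (product of copies of `Ω(A)`
indexed by `I → A`), the substructure generated by the projections `π_i : x ↦ x i` consists
exactly of the finitely determined functions. -/
theorem stmt_9 (A : Type*) [Infinite A] (I : Type*) (g : (I → A) → A) :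
    g ∈ Substructure.closure (LA A)
        {p : (I → A) → A | ∃ i : I, p = fun x : I → A => x i} ↔
      ∃ s : Finset I, ∀ x y : I → A, (∀ i ∈ s, x i = y i) → g x = g y := by
  constructor
  · intro h
    classical
    refine Substructure.closure_induction
      (p := fun g => ∃ s : Finset I, ∀ x y : I → A, (∀ i ∈ s, x i = y i) → g x = g y)
      h ?_ ?_
    · rintro p ⟨i, rfl⟩
      exact ⟨{i}, fun x y h => h i (Finset.mem_singleton_self i)⟩
    · intro n f p hp
      choose s hs using hp
      refine ⟨Finset.univ.sup s, fun x y hxy => ?_⟩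
      show f (fun k => p k x) = f (fun k => p k y)
      congr 1
      funext k
      exact hs k x y fun i hi =>
        hxy i (Finset.le_iff_subset.mp (Finset.le_sup (Finset.mem_univ k)) hi)
  · rintro ⟨s, hs⟩
    classical
    set a0 : A := Classical.arbitrary A with ha0
    set e : Fin s.card → I := fun k => (s.equivFin.symm k : I) with he
    set f : (Fin s.card → A) → A :=
      fun v => g (fun i => if h : i ∈ s then v (s.equivFin ⟨i, h⟩) else a0) with hf
    have key : g = Structure.funMap (L := LA A) f (fun k x => x (e k)) := by
      funext x
      show g x = f (fun k => x (e k))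
      refine hs _ _ fun i hi => ?_
      simp [hf, he, hi]
    rw [key]
    exact Substructure.fun_mem
      (Substructure.closure (LA A) {p : (I → A) → A | ∃ i : I, p = fun x : I → A => x i})
      (n := s.card) f _ fun k => Substructure.subset_closure ⟨e k, rfl⟩
end

section
/- Let M be a clone-compatible L_A-structure and let α : I → M. Then there is exactly one function φ : F(A,I) → M such that φ(π_i) = α i for every i ∈ I, and φ commutes with all L_A-operations: for every n, every g : (Fin n → A) → A, and every ℓ : Fin n → F(A,I), φ (fun x => g (fun k => ℓ k x)) equals the interpretation in M of g applied to fun k => φ (ℓ k). -/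
open FirstOrder Language

/-- `F(A,I)`: the set of finitely determined functions `(I → A) → A`. -/
def FinDet (A I : Type*) : Set ((I → A) → A) :=
  {g | ∃ s : Finset I, ∀ x y : I → A, (∀ i ∈ s, x i = y i) → g x = g y}

/-- Each projection `π_i` is finitely determined. -/
theorem projMem (A : Type*) {I : Type*} (i : I) : (fun x : I → A => x i) ∈ FinDet A I :=
  ⟨{i}, fun _ _ h => h i (Finset.mem_singleton_self i)⟩

/-- `φ : F(A,I) → M` sends each projection to `α i` and commutes with all `L_A`-operations. -/
def IsPhi {A I M : Type*} [(LA A).Structure M] (α : I → M) (φ : FinDet A I → M) : Prop :=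
  (∀ i : I, φ ⟨fun x => x i, projMem A i⟩ = α i) ∧
  ∀ (n : ℕ) (g : (Fin n → A) → A) (ℓ : Fin n → FinDet A I)
    (h : (fun x : I → A => g fun k => (ℓ k).1 x) ∈ FinDet A I),
    φ ⟨fun x : I → A => g fun k => (ℓ k).1 x, h⟩ =
      Structure.funMap (L := LA A) g fun k => φ (ℓ k)

section Aux

variable {A I M : Type*} [Nonempty A]

/-- `s` determines `g`. -/
def Det (s : Finset I) (g : (I → A) → A) : Prop :=
  ∀ x y : I → A, (∀ i ∈ s, x i = y i) → g x = g y

omit [Nonempty A] in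
theorem Det.mono {s t : Finset I} {g : (I → A) → A} (hs : Det s g) (hst : s ⊆ t) :
    Det t g :=
  fun x y hxy => hs x y fun i hi => hxy i (hst hi)

/-- Extend a tuple indexed by `Fin s.card` to all of `I`, with junk values off `s`. -/
noncomputable def extFD (s : Finset I) (v : Fin s.card → A) : I → A :=
  fun i => letI := Classical.decEq I
    if h : i ∈ s then v (s.equivFin ⟨i, h⟩) else Classical.arbitrary A

/-- The finitary function corresponding to `g` on support `s`. -/
noncomputable def liftFD (s : Finset I) (g : (I → A) → A) : (Fin s.card → A) → A :=
  fun v => g (extFD s v)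

theorem liftFD_recover {s : Finset I} {g : (I → A) → A} (hs : Det s g) (x : I → A) :
    liftFD s g (fun k => x ((s.equivFin.symm k : s) : I)) = g x := by
  apply hs
  intro i hi
  simp [extFD, hi]

/-- The index map induced by an inclusion of finsets. -/
noncomputable def idxMap (s t : Finset I) (hst : s ⊆ t) : Fin s.card → Fin t.card :=
  fun k => t.equivFin ⟨((s.equivFin.symm k : s) : I), hst (s.equivFin.symm k).2⟩

variable [(LA A).Structure M]

/-- The tuple in `M` obtained from `α` along the enumeration of `s`. -/
noncomputable def alphaE (α : I → M) (s : Finset I) : Fin s.card → M :=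
  fun k => α ((s.equivFin.symm k : s) : I)

theorem mono_lemma (hM : CloneCompatible A M) (α : I → M) {s t : Finset I}
    (hst : s ⊆ t) {g : (I → A) → A} (hs : Det s g) :
    Structure.funMap (L := LA A) (liftFD s g) (alphaE α s) =
      Structure.funMap (L := LA A) (liftFD t g) (alphaE α t) := by
  have hfun : liftFD t g =
      fun v : Fin t.card → A => liftFD s g (fun k => v (idxMap s t hst k)) := by
    funext v
    apply hs _ _ ?_ |>.symm
    intro i hi
    simp [extFD, hi, hst hi, idxMap]
  calc
    Structure.funMap (L := LA A) (liftFD s g) (alphaE α s)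
        = Structure.funMap (L := LA A) (liftFD s g)
            (fun k => Structure.funMap (L := LA A)
              (fun v : Fin t.card → A => v (idxMap s t hst k)) (alphaE α t)) := by
          congr 1
          funext k
          rw [hM.1]
          simp [alphaE, idxMap]
    _ = Structure.funMap (L := LA A)
          (fun v : Fin t.card → A => liftFD s g (fun k => v (idxMap s t hst k)))
          (alphaE α t) :=
        (hM.2 s.card t.card (liftFD s g)
          (fun k v => v (idxMap s t hst k)) (alphaE α t)).symm
    _ = Structure.funMap (L := LA A) (liftFD t g) (alphaE α t) := by rw [hfun]

theorem welldef (hM : CloneCompatible A M) (α : I → M) {s t : Finset I}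
    {g : (I → A) → A} (hs : Det s g) (ht : Det t g) :
    Structure.funMap (L := LA A) (liftFD s g) (alphaE α s) =
      Structure.funMap (L := LA A) (liftFD t g) (alphaE α t) := by
  classical
  exact (mono_lemma hM α Finset.subset_union_left hs).trans
    (mono_lemma hM α Finset.subset_union_right ht).symm

/-- The canonical candidate for `φ`. -/
noncomputable def phi0 (α : I → M) (g : FinDet A I) : M :=
  Structure.funMap (L := LA A) (liftFD (Classical.choose g.2) g.1)
    (alphaE α (Classical.choose g.2))

theorem phi0_eq (hM : CloneCompatible A M) (α : I → M) (g : FinDet A I)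
    {s : Finset I} (hs : Det s g.1) :
    phi0 α g = Structure.funMap (L := LA A) (liftFD s g.1) (alphaE α s) :=
  welldef hM α (Classical.choose_spec g.2) hs

/-- Any `φ` satisfying `IsPhi` agrees with the canonical formula. -/
theorem isPhi_eq (hM : CloneCompatible A M) (α : I → M) {φ : FinDet A I → M}
    (hφ : IsPhi α φ) (g : FinDet A I) {s : Finset I} (hs : Det s g.1) :
    φ g = Structure.funMap (L := LA A) (liftFD s g.1) (alphaE α s) := by
  have hcomp : (fun x : I → A => liftFD s g.1 fun k => x ((s.equivFin.symm k : s) : I))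
      = g.1 := funext fun x => liftFD_recover hs x
  have hmem : (fun x : I → A => liftFD s g.1 fun k => x ((s.equivFin.symm k : s) : I))
      ∈ FinDet A I := hcomp.symm ▸ g.2
  have key := hφ.2 s.card (liftFD s g.1)
    (fun k => ⟨fun x => x ((s.equivFin.symm k : s) : I), projMem A _⟩) hmem
  have e1 : (⟨fun x : I → A => liftFD s g.1 fun k => x ((s.equivFin.symm k : s) : I),
      hmem⟩ : FinDet A I) = g := Subtype.ext hcomp
  rw [e1] at key
  rw [key]
  congr 1
  funext k
  exact hφ.1 _

theorem isPhi_phi0 (hM : CloneCompatible A M) (α : I → M) : IsPhi α (phi0 (A := A) α) := by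
  classical
  constructor
  · intro i
    have hdet : Det ({i} : Finset I) (fun x : I → A => x i) :=
      fun x y h => h i (Finset.mem_singleton_self i)
    rw [phi0_eq hM α _ hdet]
    have hproj : liftFD ({i} : Finset I) (fun x : I → A => x i)
        = fun v : Fin ({i} : Finset I).card → A =>
            v (({i} : Finset I).equivFin ⟨i, Finset.mem_singleton_self i⟩) := by
      funext v
      simp [liftFD, extFD]
    rw [hproj, hM.1]
    simp [alphaE]
  · intro n g ℓ h
    set u : Finset I := Finset.univ.biUnion (fun k : Fin n => Classical.choose (ℓ k).2)
      with hu
    have hsub : ∀ k : Fin n, Classical.choose (ℓ k).2 ⊆ u := fun k => by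
      rw [hu]
      exact Finset.subset_biUnion_of_mem (fun k : Fin n => Classical.choose (ℓ k).2)
        (Finset.mem_univ k)
    have hdetk : ∀ k : Fin n, Det u (ℓ k).1 := fun k =>
      Det.mono (Classical.choose_spec (ℓ k).2) (hsub k)
    have hdet : Det u (fun x : I → A => g fun k => (ℓ k).1 x) :=
      fun x y hxy => congrArg g (funext fun k => hdetk k x y hxy)
    rw [phi0_eq hM α _ hdet]
    have hfun : liftFD u (fun x : I → A => g fun k => (ℓ k).1 x)
        = fun v : Fin u.card → A => g fun k => liftFD u (ℓ k).1 v := rfl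
    rw [hfun, hM.2 n u.card g (fun k => liftFD u (ℓ k).1) (alphaE α u)]
    congr 1
    funext k
    exact (phi0_eq hM α (ℓ k) (hdetk k)).symm

end Aux

/-- If `M` is a clone-compatible `L_A`-structure and `α : I → M`, then there is
exactly one map `φ : F(A,I) → M` sending each projection `π_i` to `α i` and commuting with all
the `L_A`-operations. -/
theorem stmt_10 (A : Type*) [Infinite A] (I M : Type*) [(LA A).Structure M]
    (hM : CloneCompatible A M) (α : I → M) :
    ∃! φ : FinDet A I → M, IsPhi α φ := by
  refine ⟨phi0 (A := A) α, isPhi_phi0 hM α, ?_⟩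
  intro φ hφ
  funext g
  rw [isPhi_eq hM α hφ g (Classical.choose_spec g.2),
    ← phi0_eq hM α g (Classical.choose_spec g.2)]
end

section
/- Equip A with the discrete uniformity and I → A with the product uniformity. Then a function g : (I → A) → A is uniformly continuous if and only if g is finitely determined, i.e., there exists a finite set s ⊆ I such that g x = g y whenever x and y agree on s. -/
open Uniformity


/-- With `A` carrying the discrete uniformity (`⊥`) and `I → A` the product
uniformity, a function `g : (I → A) → A` is uniformly continuous iff it is finitely
determined. -/
theorem stmt_11 (A I : Type*) [Infinite A] (g : (I → A) → A) :
    @UniformContinuous (I → A) A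
        (Pi.uniformSpace (fun _ : I => A) (U := fun _ => ⊥)) ⊥ g ↔
      ∃ s : Finset I, ∀ x y : I → A, (∀ i ∈ s, x i = y i) → g x = g y := by
  letI : UniformSpace A := ⊥
  letI : UniformSpace (I → A) := Pi.uniformSpace (fun _ : I => A) (U := fun _ => ⊥)
  have hU : (𝓤 (I → A)) = ⨅ i : I, Filter.principal {p : (I → A) × (I → A) | p.1 i = p.2 i} := by
    rw [Pi.uniformity]
    congr 1
    ext i
    rw [show (𝓤 A) = Filter.principal SetRel.id from rfl, Filter.comap_principal]
    rfl
  constructor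
  · intro h
    have hmem : {p : (I → A) × (I → A) | g p.1 = g p.2} ∈ 𝓤 (I → A) := by
      have := h (by exact Filter.mem_principal_self SetRel.id : SetRel.id ∈ 𝓤 A)
      simpa [SetRel.id, Set.preimage] using this
    rw [hU, Filter.mem_iInf] at hmem
    obtain ⟨s, hs, V, hV, hEq⟩ := hmem
    refine ⟨hs.toFinset, fun x y hxy => ?_⟩
    have : (x, y) ∈ {p : (I → A) × (I → A) | g p.1 = g p.2} := by
      rw [hEq]
      refine Set.mem_iInter.2 fun i => ?_
      exact (Filter.mem_principal.1 (hV i)) (hxy i (hs.mem_toFinset.2 i.2))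
    exact this
  · rintro ⟨s, hs⟩
    intro U hU'
    have hid : SetRel.id ⊆ U := Filter.mem_principal.1 hU'
    rw [hU, Filter.mem_map]
    have hmem : (⋂ i ∈ s, {p : (I → A) × (I → A) | p.1 i = p.2 i}) ∈
        ⨅ i : I, Filter.principal {p : (I → A) × (I → A) | p.1 i = p.2 i} := by
      refine (Filter.biInter_mem s.finite_toSet).2 fun i _ => ?_
      exact Filter.mem_iInf_of_mem i (Filter.mem_principal_self _)
    refine Filter.mem_of_superset hmem fun p hp => ?_
    have : g p.1 = g p.2 := hs p.1 p.2 (fun i hi => by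
      simpa using Set.mem_iInter₂.1 hp i hi)
    exact hid (by simpa [SetRel.id] using this)
end

section
/- Let M be a clone-compatible L_A-structure, let f : (I → A) → (J → A) be uniformly continuous (A discrete, products with product uniformity), let α : I → M, and define β : J → M by β j = φ_α (fun x => f x j). Call a set R ⊆ (J → A) φ_β-stabilizing if for all finitely determined ℓ₁, ℓ₂ : (J → A) → A that agree on R, φ_β(ℓ₁) = φ_β(ℓ₂); define φ_α-stabilizing subsets of I → A analogously. Then for all finitely determined ℓ₁, ℓ₂ : (J → A) → A, with R = {y | ℓ₁ y = ℓ₂ y}: R is φ_β-stabilizing if and only if f⁻¹(R) is φ_α-stabilizing. -/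
open FirstOrder Language

/-- A set `R ⊆ (I → A)` is `φ`-stabilizing if any two finitely determined functions agreeing
on `R` have the same image under `φ`. -/
def Stabilizing {A I M : Type*} (φ : FinDet A I → M) (R : Set (I → A)) : Prop :=
  ∀ ℓ₁ ℓ₂ : FinDet A I, (∀ x ∈ R, ℓ₁.1 x = ℓ₂.1 x) → φ ℓ₁ = φ ℓ₂

/- ## Auxiliary lemmas -/

theorem comp_findet {A I J : Type*} {f : (I → A) → (J → A)}
    (hcoord : ∀ j : J, (fun x : I → A => f x j) ∈ FinDet A I)
    (ℓ : FinDet A J) : (fun x : I → A => ℓ.1 (f x)) ∈ FinDet A I := by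
  classical
  obtain ⟨t, ht⟩ := ℓ.2
  refine ⟨t.biUnion fun j => (hcoord j).choose, fun x y h => ?_⟩
  refine ht _ _ fun j hj => (hcoord j).choose_spec x y fun i hi => h i ?_
  exact Finset.mem_biUnion.2 ⟨j, hj, hi⟩

/-- Choice of a common enumeration of a support. -/
theorem hat {A I : Type*} [Nonempty A] (s : Finset I) :
    ∃ e : Fin s.card → I, (∀ k, e k ∈ s) ∧
      ∀ g : (I → A) → A, (∀ x y : I → A, (∀ i ∈ s, x i = y i) → g x = g y) →
        ∃ G : (Fin s.card → A) → A, ∀ x, g x = G fun k => x (e k) := by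
  classical
  refine ⟨fun k => (s.equivFin.symm k).1, fun k => (s.equivFin.symm k).2, fun g hg => ?_⟩
  set ext : (Fin s.card → A) → (I → A) := fun w i =>
    if h : i ∈ s then w (s.equivFin ⟨i, h⟩) else Classical.arbitrary A with hext
  refine ⟨fun w => g (ext w), fun x => ?_⟩
  refine hg x _ fun i hi => ?_
  rw [hext]
  simp only [dif_pos hi]
  rw [Equiv.symm_apply_apply]

theorem cons2_zero {α : Type*} {n : ℕ} (a b : α) (w : Fin n → α) :
    (Fin.cons a (Fin.cons b w) : Fin (n + 2) → α) 0 = a := by simp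

theorem cons2_one {α : Type*} {n : ℕ} (a b : α) (w : Fin n → α) :
    (Fin.cons a (Fin.cons b w) : Fin (n + 2) → α) 1 = b := by
  rw [Fin.cons_one, Fin.cons_zero]

theorem cons2_succ {α : Type*} {n : ℕ} (a b : α) (w : Fin n → α) (k : Fin n) :
    (Fin.cons a (Fin.cons b w) : Fin (n + 2) → α) k.succ.succ = w k := by
  rw [Fin.cons_succ, Fin.cons_succ]

open Classical in
theorem condApply {A : Type*} [Nonempty A] {n : ℕ} (G₁ G₂ : (Fin n → A) → A)
    (a b : A) (w : Fin n → A) :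
    (fun v : Fin (n + 2) → A =>
        if v 0 = v 1 then G₂ (fun k => v k.succ.succ) else G₁ (fun k => v k.succ.succ))
      (Fin.cons a (Fin.cons b w)) = if a = b then G₂ w else G₁ w := by
  simp only [cons2_zero, cons2_one, cons2_succ]

theorem pair_zero {α : Type*} (a b : α) : (Fin.cons a (fun _ => b) : Fin 2 → α) 0 = a := by
  simp

theorem pair_one {α : Type*} (a b : α) : (Fin.cons a (fun _ => b) : Fin 2 → α) 1 = b := by
  rw [Fin.cons_one]

open Classical in
theorem sigma_pair {A : Type*} [Nonempty A] (a b : A) :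
    (fun p : Fin 2 → A => if p 0 = p 1 then p 0 else Classical.arbitrary A)
      (Fin.cons a fun _ => b) = if a = b then a else Classical.arbitrary A := by
  simp only [pair_zero, pair_one]

/-- Let `M` be clone-compatible, `f : (I → A) → (J → A)` uniformly continuous
(`A` discrete, products with the product uniformity), `α : I → M`, and let `β : J → M` be
given by `β j = φ_α (fun x => f x j)`.  Then for all finitely determined
`ℓ₁, ℓ₂ : (J → A) → A`, the equalizer `R = {y | ℓ₁ y = ℓ₂ y}` is `φ_β`-stabilizing iff
`f ⁻¹' R` is `φ_α`-stabilizing. -/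
theorem stmt_16 (A I J M : Type*) [Infinite A] [(LA A).Structure M]
    (hM : CloneCompatible A M) (f : (I → A) → (J → A))
    (hf : @UniformContinuous (I → A) (J → A)
        (Pi.uniformSpace (fun _ : I => A) (U := fun _ => ⊥))
        (Pi.uniformSpace (fun _ : J => A) (U := fun _ => ⊥)) f)
    (α : I → M) (φα : FinDet A I → M) (hφα : IsPhi α φα)
    (hcoord : ∀ j : J, (fun x : I → A => f x j) ∈ FinDet A I)
    (φβ : FinDet A J → M)
    (hφβ : IsPhi (fun j : J => φα ⟨fun x => f x j, hcoord j⟩) φβ) :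
    ∀ ℓ₁ ℓ₂ : FinDet A J,
      Stabilizing φβ {y : J → A | ℓ₁.1 y = ℓ₂.1 y} ↔
        Stabilizing φα (f ⁻¹' {y : J → A | ℓ₁.1 y = ℓ₂.1 y}) := by
  classical
  have hne : Nonempty A := inferInstance
  -- Key lemma: φβ ℓ = φα (ℓ ∘ f)
  have K : ∀ ℓ : FinDet A J, φβ ℓ = φα ⟨fun x => ℓ.1 (f x), comp_findet hcoord ℓ⟩ := by
    intro ℓ
    obtain ⟨t, ht⟩ := ℓ.2
    obtain ⟨e, he, hhat⟩ := hat (A := A) t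
    obtain ⟨G, hG⟩ := hhat ℓ.1 ht
    have hmem1 : (fun y : J → A => G fun k => y (e k)) ∈ FinDet A J :=
      ⟨t, fun y y' h => congrArg G (funext fun k => h (e k) (he k))⟩
    have hmem2 : (fun x : I → A => G fun k => f x (e k)) ∈ FinDet A I := by
      have h2 : (fun x : I → A => G fun k => f x (e k)) = fun x => ℓ.1 (f x) :=
        funext fun x => (hG (f x)).symm
      rw [h2]; exact comp_findet hcoord ℓ
    calc φβ ℓ = φβ ⟨fun y => G fun k => y (e k), hmem1⟩ := by
          exact congrArg φβ (Subtype.ext (funext hG))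
      _ = Structure.funMap (L := LA A) G
            (fun k => φβ ⟨fun y => y (e k), projMem A (e k)⟩) :=
          hφβ.2 t.card G (fun k => ⟨fun y => y (e k), projMem A (e k)⟩) hmem1
      _ = Structure.funMap (L := LA A) G
            (fun k => φα ⟨fun x => f x (e k), hcoord (e k)⟩) := by
          exact congrArg _ (funext fun k => hφβ.1 (e k))
      _ = φα ⟨fun x => G fun k => f x (e k), hmem2⟩ :=
          (hφα.2 t.card G (fun k => ⟨fun x => f x (e k), hcoord (e k)⟩) hmem2).symm
      _ = φα ⟨fun x => ℓ.1 (f x), comp_findet hcoord ℓ⟩ :=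
          congrArg φα (Subtype.ext (funext fun x => (hG (f x)).symm))
  intro ℓ₁ ℓ₂
  constructor
  · -- hard direction
    intro hR g₁ g₂ hg
    obtain ⟨s₁, hs₁⟩ := g₁.2
    obtain ⟨s₂, hs₂⟩ := g₂.2
    obtain ⟨e, he, hhat⟩ := hat (A := A) (s₁ ∪ s₂)
    obtain ⟨G₁, hG₁⟩ :=
      hhat g₁.1 fun x y h => hs₁ x y fun i hi => h i (Finset.mem_union_left _ hi)
    obtain ⟨G₂, hG₂⟩ :=
      hhat g₂.1 fun x y h => hs₂ x y fun i hi => h i (Finset.mem_union_right _ hi)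
    set c₁ : FinDet A I := ⟨fun x => ℓ₁.1 (f x), comp_findet hcoord ℓ₁⟩ with hc₁
    set c₂ : FinDet A I := ⟨fun x => ℓ₂.1 (f x), comp_findet hcoord ℓ₂⟩ with hc₂
    set L : Fin ((s₁ ∪ s₂).card + 2) → FinDet A I :=
      Fin.cons c₁ (Fin.cons c₂ fun k => ⟨fun x => x (e k), projMem A (e k)⟩) with hLdef
    set D : (Fin ((s₁ ∪ s₂).card + 2) → A) → A :=
      fun v => if v 0 = v 1 then G₂ (fun k => v k.succ.succ) else G₁ (fun k => v k.succ.succ)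
      with hDdef
    set D' : (Fin ((s₁ ∪ s₂).card + 2) → A) → A := fun v => G₂ (fun k => v k.succ.succ) with hD'def
    have hL0 : L 0 = c₁ := by rw [hLdef]; exact Fin.cons_zero _ _
    have hL1 : L 1 = c₂ := by rw [hLdef]; exact cons2_one _ _ _
    have hargs : ∀ x : I → A, (fun k => (L k).1 x) =
        Fin.cons (ℓ₁.1 (f x)) (Fin.cons (ℓ₂.1 (f x)) fun k => x (e k)) := by
      intro x; funext k
      refine Fin.cases ?_ (fun k' => ?_) k
      · rw [cons2_zero, hL0, hc₁]
      · refine Fin.cases ?_ (fun k'' => ?_) k'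
        · rw [Fin.succ_zero_eq_one', cons2_one, hL1, hc₂]
        · rw [cons2_succ, hLdef, cons2_succ]
    have hD1 : (fun x : I → A => D fun k => (L k).1 x) = g₁.1 := by
      funext x
      rw [hargs x, hDdef, condApply]
      by_cases hx : ℓ₁.1 (f x) = ℓ₂.1 (f x)
      · rw [if_pos hx, ← hG₂ x]
        exact (hg x hx).symm
      · rw [if_neg hx, ← hG₁ x]
    have hD2 : (fun x : I → A => D' fun k => (L k).1 x) = g₂.1 := by
      funext x
      rw [hargs x, hD'def]
      simp only [cons2_succ]
      exact (hG₂ x).symm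
    have hmem1 : (fun x : I → A => D fun k => (L k).1 x) ∈ FinDet A I := by
      rw [hD1]; exact g₁.2
    have hmem2 : (fun x : I → A => D' fun k => (L k).1 x) ∈ FinDet A I := by
      rw [hD2]; exact g₂.2
    have hEv1 : φα g₁ = Structure.funMap (L := LA A) D fun k => φα (L k) := by
      rw [show g₁ = ⟨fun x => D fun k => (L k).1 x, hmem1⟩ from Subtype.ext hD1.symm]
      exact hφα.2 ((s₁ ∪ s₂).card + 2) D L hmem1
    have hEv2 : φα g₂ = Structure.funMap (L := LA A) D' fun k => φα (L k) := by
      rw [show g₂ = ⟨fun x => D' fun k => (L k).1 x, hmem2⟩ from Subtype.ext hD2.symm]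
      exact hφα.2 ((s₁ ∪ s₂).card + 2) D' L hmem2
    -- the binary "equality test" operation
    set σ : (Fin 2 → A) → A :=
      fun p => if p 0 = p 1 then p 0 else Classical.arbitrary A with hσdef
    set Λ : Fin 2 → FinDet A J := Fin.cons ℓ₁ (fun _ => ℓ₂) with hΛdef
    have hΛ0 : Λ 0 = ℓ₁ := by rw [hΛdef]; exact Fin.cons_zero _ _
    have hΛ1 : Λ 1 = ℓ₂ := by rw [hΛdef]; exact pair_one _ _
    have hpair : ∀ y : J → A, (fun k => (Λ k).1 y) =
        Fin.cons (ℓ₁.1 y) (fun _ => ℓ₂.1 y) := by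
      intro y; funext k
      refine Fin.cases ?_ (fun k' => ?_) k
      · rw [pair_zero, hΛ0]
      · rw [Fin.cons_succ, hΛdef, Fin.cons_succ]
    have hmemσ : (fun y : J → A => σ fun k => (Λ k).1 y) ∈ FinDet A J := by
      obtain ⟨t₁, ht₁⟩ := ℓ₁.2
      obtain ⟨t₂, ht₂⟩ := ℓ₂.2
      refine ⟨t₁ ∪ t₂, fun y y' h => ?_⟩
      have e1 : ℓ₁.1 y = ℓ₁.1 y' := ht₁ _ _ fun j hj => h j (Finset.mem_union_left _ hj)
      have e2 : ℓ₂.1 y = ℓ₂.1 y' := ht₂ _ _ fun j hj => h j (Finset.mem_union_right _ hj)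
      show σ (fun k => (Λ k).1 y) = σ fun k => (Λ k).1 y'
      rw [hpair y, hpair y', e1, e2]
    have hσβ : φβ ⟨fun y => σ fun k => (Λ k).1 y, hmemσ⟩ =
        Structure.funMap (L := LA A) σ fun k => φβ (Λ k) := hφβ.2 2 σ Λ hmemσ
    have hσval : ∀ y : J → A, ℓ₁.1 y = ℓ₂.1 y → σ (fun k => (Λ k).1 y) = ℓ₁.1 y := by
      intro y hy
      rw [hpair y, hσdef, sigma_pair, if_pos hy]
    have hu1 : Structure.funMap (L := LA A) σ (fun k => φβ (Λ k)) = φβ ℓ₁ := by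
      rw [← hσβ]
      exact hR _ _ fun y hy => hσval y hy
    have hu2 : Structure.funMap (L := LA A) σ (fun k => φβ (Λ k)) = φβ ℓ₂ := by
      rw [← hσβ]
      exact hR _ _ fun y hy => (hσval y hy).trans hy
    -- lift σ to a family of (n+2)-ary operations
    set S : (Fin ((s₁ ∪ s₂).card + 2) → A) → A := fun v => σ (Fin.cons (v 0) fun _ => v 1) with hSdef
    set P : Fin ((s₁ ∪ s₂).card + 2) → ((Fin ((s₁ ∪ s₂).card + 2) → A) → A) :=
      Fin.cons S (Fin.cons S fun k => fun v => v k.succ.succ) with hPdef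
    set Q : Fin 2 → ((Fin ((s₁ ∪ s₂).card + 2) → A) → A) :=
      Fin.cons (fun v => v 0) (fun _ => fun v => v 1) with hQdef
    have hQ0 : Q 0 = fun v => v 0 := by rw [hQdef]; exact Fin.cons_zero _ _
    have hQ1 : ∀ k' : Fin 1, Q k'.succ = fun v => v 1 := by
      intro k'; rw [hQdef, Fin.cons_succ]
    have hSQ : S = fun v : Fin ((s₁ ∪ s₂).card + 2) → A => σ fun k2 => Q k2 v := by
      funext v
      show σ (Fin.cons (v 0) fun _ => v 1) = σ fun k2 => Q k2 v
      have harg : (Fin.cons (v 0) fun _ => v 1) = fun k2 => Q k2 v := by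
        funext k2
        refine Fin.cases ?_ (fun k' => ?_) k2
        · show (Fin.cons (v 0) fun _ => v 1 : Fin 2 → A) 0 = Q 0 v
          rw [pair_zero, hQ0]
        · show (Fin.cons (v 0) fun _ => v 1 : Fin 2 → A) k'.succ = Q k'.succ v
          rw [Fin.cons_succ, hQ1]
      rw [harg]
    have hχval : ∀ k2 : Fin 2,
        Structure.funMap (L := LA A) (Q k2) (fun k => φα (L k)) = φβ (Λ k2) := by
      intro k2
      refine Fin.cases ?_ (fun k' => ?_) k2
      · rw [hQ0, hΛ0, hM.1 ((s₁ ∪ s₂).card + 2) 0 (fun k => φα (L k)), hL0, hc₁, K ℓ₁]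
      · have hk' : k' = 0 := Subsingleton.elim _ _
        subst hk'
        rw [hQ1 0, Fin.succ_zero_eq_one', hΛ1,
          hM.1 ((s₁ ∪ s₂).card + 2) 1 (fun k => φα (L k)), hL1, hc₂, K ℓ₂]
    have hfS1 : Structure.funMap (L := LA A) S (fun k => φα (L k)) = φβ ℓ₁ := by
      rw [hSQ, hM.2 2 ((s₁ ∪ s₂).card + 2) σ Q (fun k => φα (L k)), funext hχval]
      exact hu1
    have hfS2 : Structure.funMap (L := LA A) S (fun k => φα (L k)) = φβ ℓ₂ := by
      rw [hSQ, hM.2 2 ((s₁ ∪ s₂).card + 2) σ Q (fun k => φα (L k)), funext hχval]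
      exact hu2
    have hP0 : P 0 = S := by rw [hPdef]; exact Fin.cons_zero _ _
    have hP1 : P 1 = S := by rw [hPdef]; exact cons2_one _ _ _
    have hPs : ∀ k : Fin (s₁ ∪ s₂).card, P k.succ.succ = fun v => v k.succ.succ := by
      intro k; rw [hPdef]; exact cons2_succ _ _ _ _
    have hPχ : (fun k => Structure.funMap (L := LA A) (P k) (fun k' => φα (L k'))) =
        fun k => φα (L k) := by
      funext k
      refine Fin.cases ?_ (fun k' => ?_) k
      · rw [hP0, hfS1, hL0, hc₁, K ℓ₁]
      · refine Fin.cases ?_ (fun k'' => ?_) k'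
        · rw [Fin.succ_zero_eq_one', hP1, hfS2, hL1, hc₂, K ℓ₂]
        · rw [hPs k'', hM.1 ((s₁ ∪ s₂).card + 2) k''.succ.succ (fun k => φα (L k))]
    have hDeq : ∀ w : Fin ((s₁ ∪ s₂).card + 2) → A, w 0 = w 1 → D w = D' w := by
      intro w hw
      rw [hDdef, hD'def]
      exact if_pos hw
    have hcomp1 : Structure.funMap (L := LA A) D (fun k => φα (L k)) =
        Structure.funMap (L := LA A) D' (fun k => φα (L k)) := by
      have h1 := hM.2 ((s₁ ∪ s₂).card + 2) ((s₁ ∪ s₂).card + 2) D P (fun k => φα (L k))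
      have h2 := hM.2 ((s₁ ∪ s₂).card + 2) ((s₁ ∪ s₂).card + 2) D' P (fun k => φα (L k))
      rw [hPχ] at h1 h2
      rw [← h1, ← h2]
      refine congrArg (fun F : (Fin ((s₁ ∪ s₂).card + 2) → A) → A =>
        Structure.funMap (L := LA A) F (fun k => φα (L k))) ?_
      funext v
      show D (fun k => P k v) = D' fun k => P k v
      exact hDeq (fun k => P k v) (by show P 0 v = P 1 v; rw [hP0, hP1])
    rw [hEv1, hEv2]
    exact hcomp1
  · intro hS m₁ m₂ hm
    rw [K m₁, K m₂]
    exact hS _ _ fun x hx => hm (f x) hx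
end

section
/- Let F be an order filter on Setoid I and let Z ⊆ 𝔅(F) be an ultrafilter on the Boolean algebra 𝔅(F): I ∈ Z, ∅ ∉ Z, Z is closed under binary intersections, Z is upward closed within 𝔅(F), and for every R ∈ 𝔅(F), either R ∈ Z or I \ R ∈ Z. Let θ_Z be the congruence on Ω(A)^F = {f : I → A | ker f ∈ F} given by θ_Z f g ↔ {i | f i = g i} ∈ Z. Then every congruence θ on Ω(A)^F that contains θ_Z (i.e., θ_Z f g implies θ f g) is either equal to θ_Z or relates all pairs of elements of Ω(A)^F. -/
lemma mem_bAlg_of_saturated {I : Type*} (F : Order.PFilter (Setoid I)) (s : Setoid I)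
    (hs : s ∈ F) (U : Set I) (hU : ∀ i j, s i j → (i ∈ U ↔ j ∈ U)) :
    U ∈ bAlg (F : Set (Setoid I)) := by
  rcases U.eq_empty_or_nonempty with h | ⟨i0, hi0⟩
  · exact Or.inl h
  · refine Or.inr ⟨⟨fun i j => (i ∈ U ∧ j ∈ U) ∨ s i j, ?_, ?_, ?_⟩, ?_, i0, ?_⟩
    · exact fun i => Or.inr (s.refl i)
    · rintro i j (⟨h1, h2⟩ | h); exacts [Or.inl ⟨h2, h1⟩, Or.inr (s.symm h)]
    · rintro i j k (⟨h1, h2⟩ | h) (⟨h3, h4⟩ | h')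
      · exact Or.inl ⟨h1, h4⟩
      · exact Or.inl ⟨h1, (hU j k h').mp h2⟩
      · exact Or.inl ⟨(hU i j h).mpr h3, h4⟩
      · exact Or.inr (s.trans h h')
    · exact Order.PFilter.mem_of_le (Setoid.le_def.mpr fun h => Or.inr h) hs
    · ext j
      constructor
      · exact fun hj => Or.inl ⟨hi0, hj⟩
      · rintro (⟨_, hj⟩ | h); exacts [hj, (hU i0 j h).mp hi0]

/-- Let `F` be an order filter on `Setoid I` and let `Z ⊆ 𝔅(F)` be an
ultrafilter on the Boolean algebra `𝔅(F)`.  Let `θ_Z` be the congruence on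
`Ω(A)^F = {f : I → A | ker f ∈ F}` given by `θ_Z f g ↔ {i | f i = g i} ∈ Z`.  Then every
congruence `θ` on `Ω(A)^F` containing `θ_Z` is either equal to `θ_Z` or relates all pairs. -/
theorem stmt_17 (A : Type*) [Infinite A] (I : Type*) (F : Order.PFilter (Setoid I))
    (Z : Set (Set I)) (hZB : Z ⊆ bAlg (F : Set (Setoid I)))
    (hZuniv : (Set.univ : Set I) ∈ Z) (hZempty : (∅ : Set I) ∉ Z)
    (hZinter : ∀ R ∈ Z, ∀ S ∈ Z, R ∩ S ∈ Z)
    (hZup : ∀ R ∈ Z, ∀ S ∈ bAlg (F : Set (Setoid I)), R ⊆ S → S ∈ Z)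
    (hZult : ∀ R ∈ bAlg (F : Set (Setoid I)), R ∈ Z ∨ Rᶜ ∈ Z)
    (θ : {f : I → A // Setoid.ker f ∈ F} → {f : I → A // Setoid.ker f ∈ F} → Prop)
    (hEquiv : Equivalence θ)
    (hCompat : ∀ (n : ℕ) (g : (Fin n → A) → A)
      (u v : Fin n → {f : I → A // Setoid.ker f ∈ F})
      (hu : Setoid.ker (fun i : I => g fun k => (u k).1 i) ∈ F)
      (hv : Setoid.ker (fun i : I => g fun k => (v k).1 i) ∈ F),
      (∀ k, θ (u k) (v k)) → θ ⟨fun i => g fun k => (u k).1 i, hu⟩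
        ⟨fun i => g fun k => (v k).1 i, hv⟩)
    (hcontain : ∀ f g : {f : I → A // Setoid.ker f ∈ F},
      {i : I | f.1 i = g.1 i} ∈ Z → θ f g) :
    (∀ f g : {f : I → A // Setoid.ker f ∈ F},
      θ f g ↔ {i : I | f.1 i = g.1 i} ∈ Z) ∨
    (∀ f g : {f : I → A // Setoid.ker f ∈ F}, θ f g) := by
  by_cases hθ : ∀ f g : {f : I → A // Setoid.ker f ∈ F}, θ f g → {i : I | f.1 i = g.1 i} ∈ Z
  · exact Or.inl fun f g => ⟨hθ f g, hcontain f g⟩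
  · right
    push_neg at hθ
    obtain ⟨f, g, hfg, hE⟩ := hθ
    intro p q
    classical
    set r : Setoid I := ((Setoid.ker f.1 ⊓ Setoid.ker g.1) ⊓ Setoid.ker p.1) ⊓ Setoid.ker q.1
      with hr
    have hrF : r ∈ F :=
      Order.PFilter.inf_mem (Order.PFilter.inf_mem (Order.PFilter.inf_mem f.2 g.2) p.2) q.2
    have hrf : ∀ i j, r i j → f.1 i = f.1 j := fun i j h => h.1.1.1
    have hrg : ∀ i j, r i j → g.1 i = g.1 j := fun i j h => h.1.1.2
    have hrp : ∀ i j, r i j → p.1 i = p.1 j := fun i j h => h.1.2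
    have hrq : ∀ i j, r i j → q.1 i = q.1 j := fun i j h => h.2
    -- the set where f = g
    set E : Set I := {i : I | f.1 i = g.1 i} with hEdef
    have hEB : E ∈ bAlg (F : Set (Setoid I)) := by
      refine mem_bAlg_of_saturated F r hrF E fun i j h => ?_
      simp only [hEdef, Set.mem_setOf_eq, hrf i j h, hrg i j h]
    have hEc : Eᶜ ∈ Z := (hZult E hEB).resolve_left hE
    -- w = mixture
    set w : I → A := fun i => if f.1 i = g.1 i then p.1 i else q.1 i with hw
    have hwF : Setoid.ker w ∈ F := by
      refine Order.PFilter.mem_of_le (Setoid.le_def.mpr fun {i j} h => ?_) hrF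
      rw [Setoid.ker_def]
      simp only [hw, hrf i j h, hrg i j h, hrp i j h, hrq i j h]
    -- apply compatibility with the 4-ary "conditional" operation
    set G : (Fin 4 → A) → A := fun a => if a 0 = a 1 then a 2 else a 3 with hG
    have hu : Setoid.ker (fun i : I => G fun k => (![f, f, p, q] k).1 i) ∈ F := by
      have : (fun i : I => G fun k => (![f, f, p, q] k).1 i) = p.1 := by
        funext i; simp [hG, Matrix.cons_val_zero, Matrix.cons_val_one]
      rw [this]; exact p.2
    have hv : Setoid.ker (fun i : I => G fun k => (![f, g, p, q] k).1 i) ∈ F := by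
      have : (fun i : I => G fun k => (![f, g, p, q] k).1 i) = w := by
        funext i; simp [hG, hw, Matrix.cons_val_zero, Matrix.cons_val_one]; exact if_congr Iff.rfl rfl rfl
      rw [this]; exact hwF
    have hθpw : θ p ⟨w, hwF⟩ := by
      have hcomp := hCompat 4 G ![f, f, p, q] ![f, g, p, q] hu hv (by
        intro k
        fin_cases k
        · exact hEquiv.refl f
        · exact hfg
        · exact hEquiv.refl p
        · exact hEquiv.refl q)
      have e1 : (⟨fun i => G fun k => (![f, f, p, q] k).1 i, hu⟩ :
          {f : I → A // Setoid.ker f ∈ F}) = p := by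
        apply Subtype.ext; funext i; simp [hG]
      have e2 : (⟨fun i => G fun k => (![f, g, p, q] k).1 i, hv⟩ :
          {f : I → A // Setoid.ker f ∈ F}) = ⟨w, hwF⟩ := by
        apply Subtype.ext; funext i; simp [hG, hw]; exact if_congr Iff.rfl rfl rfl
      rwa [e1, e2] at hcomp
    have hθwq : θ ⟨w, hwF⟩ q := by
      apply hcontain
      refine hZup _ hEc _ ?_ ?_
      · refine mem_bAlg_of_saturated F r hrF _ fun i j h => ?_
        simp only [Set.mem_setOf_eq, hw, hrf i j h, hrg i j h, hrp i j h, hrq i j h]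
      · intro i hi
        simp only [Set.mem_compl_iff, hEdef, Set.mem_setOf_eq] at hi
        simp [hw, hi]
    exact hEquiv.trans hθpw hθwq
end

section
/- Let M be a clone-compatible L_A-structure. If there is a finite subset S ⊆ M such that the L_A-substructure generated by S is all of M, then there is a single element m ∈ M such that the L_A-substructure generated by {m} is all of M. -/
open FirstOrder Language

noncomputable def prodSelfEquiv (A : Type*) [Infinite A] : (A × A) ≃ A :=
  Classical.choice (Cardinal.eq.mp (by
    rw [Cardinal.mk_prod, Cardinal.lift_id,
      Cardinal.mul_eq_self (Cardinal.aleph0_le_mk A)]))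

noncomputable def packEquiv (A : Type*) [Infinite A] : ∀ n : ℕ, (Fin (n+1) → A) ≃ A
  | 0 => Equiv.funUnique (Fin 1) A
  | n+1 => (Fin.consEquiv (fun _ : Fin (n+2) => A)).symm.trans
      ((Equiv.prodCongr (Equiv.refl A) (packEquiv A n)).trans (prodSelfEquiv A))

/-- If a clone-compatible `L_A`-structure `M` is generated (as an
`L_A`-substructure) by a finite subset, then it is generated by a single element. -/
theorem stmt_18 (A : Type*) [Infinite A] (M : Type*) [(LA A).Structure M]
    (hM : CloneCompatible A M) (S : Set M) (hS : S.Finite)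
    (hgen : Substructure.closure (LA A) S = ⊤) :
    ∃ m : M, Substructure.closure (LA A) ({m} : Set M) = ⊤ := by
  classical
  obtain ⟨h1, h2⟩ := hM
  obtain ⟨n, x0, _, hx0⟩ := hS.fin_param
  obtain ⟨a⟩ : Nonempty A := inferInstance
  let m0 : M := Structure.funMap (L := LA A) (n := 0) (fun _ : Fin 0 → A => a) Fin.elim0
  let x : Fin (n+1) → M := Fin.snoc x0 m0
  let e := packEquiv A n
  let m : M := Structure.funMap (L := LA A) (n := n+1) (⇑e) x
  have key : ∀ k : Fin (n+1), x k ∈ Substructure.closure (LA A) ({m} : Set M) := by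
    intro k
    have hcomp := h2 1 (n+1) (fun w : Fin 1 → A => e.symm (w 0) k) (fun _ => ⇑e) x
    have heq : (fun v : Fin (n+1) → A =>
        (fun w : Fin 1 → A => e.symm (w 0) k) fun _ => e v) = fun v => v k := by
      funext v; simp
    rw [heq, h1] at hcomp
    rw [hcomp]
    exact Substructure.fun_mem _ _ _ (fun i => Substructure.subset_closure (L := LA A) rfl)
  refine ⟨m, ?_⟩
  rw [eq_top_iff, ← hgen, Substructure.closure_le, ← hx0]
  rintro _ ⟨k, rfl⟩
  have := key (Fin.castSucc k)
  rwa [show x (Fin.castSucc k) = x0 k from Fin.snoc_castSucc _ _ _] at this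
end
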